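/- arXiv:2408.14888 — 3 statements merged into one kernel-verified Lean document; each statement's English description precedes it below -/
import Mathlib

section
/- For a = span{λ_1, λ_4, λ_7} and a' = span{λ_9, λ_{11}, λ_{13}}, every commutator [X, Y] with X ∈ a' and Y ∈ a lies in k = span{λ_2, λ_8, λ_{14}, λ_5, λ_{10}, λ_{12}}. -/
open Matrix Complex

noncomputable section

def σ1 : Matrix (Fin 2) (Fin 2) ℂ := !![0, 1; 1, 0]
def σ2 : Matrix (Fin 2) (Fin 2) ℂ := !![0, -I; I, 0]
def σ3 : Matrix (Fin 2) (Fin 2) ℂ := !![1, 0; 0, -1]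

/-- `pauli 0 = I₂`, `pauli i = σᵢ` for `i = 1, 2, 3`. -/
def pauli : Fin 4 → Matrix (Fin 2) (Fin 2) ℂ := ![1, σ1, σ2, σ3]

/-- Kronecker (tensor) product of two `2 × 2` matrices, as a `4 × 4` matrix
(row-major convention). -/
def kron (A B : Matrix (Fin 2) (Fin 2) ℂ) : Matrix (Fin 4) (Fin 4) ℂ :=
  Matrix.of fun i j =>
    A ⟨i.val / 2, by have := i.isLt; omega⟩ ⟨j.val / 2, by have := j.isLt; omega⟩ *
    B ⟨i.val % 2, by have := i.isLt; omega⟩ ⟨j.val % 2, by have := j.isLt; omega⟩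

/-- `σ_{μν} = (1/(2i)) σ_μ ⊗ σ_ν`. -/
def sig (μ ν : Fin 4) : Matrix (Fin 4) (Fin 4) ℂ :=
  (1 / (2 * I)) • kron (pauli μ) (pauli ν)

/-- The Fano basis `λ_1, …, λ_15` of `su(4)`, so that `fano (k-1) = λ_k`. -/
def fano : Fin 15 → Matrix (Fin 4) (Fin 4) ℂ :=
  ![sig 1 0, sig 2 0, sig 3 0, sig 0 1, sig 0 2, sig 0 3, sig 1 1, sig 1 2,
    sig 1 3, sig 2 1, sig 2 2, sig 2 3, sig 3 1, sig 3 2, sig 3 3]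

def aSpan : Submodule ℝ (Matrix (Fin 4) (Fin 4) ℂ) :=
  Submodule.span ℝ {fano 0, fano 3, fano 6}

def aPrimeSpan : Submodule ℝ (Matrix (Fin 4) (Fin 4) ℂ) :=
  Submodule.span ℝ {fano 8, fano 10, fano 12}

def kSpan : Submodule ℝ (Matrix (Fin 4) (Fin 4) ℂ) :=
  Submodule.span ℝ {fano 1, fano 7, fano 13, fano 4, fano 9, fano 11}

lemma kron_eq (A B : Matrix (Fin 2) (Fin 2) ℂ) : kron A B =
    !![A 0 0 * B 0 0, A 0 0 * B 0 1, A 0 1 * B 0 0, A 0 1 * B 0 1;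
      A 0 0 * B 1 0, A 0 0 * B 1 1, A 0 1 * B 1 0, A 0 1 * B 1 1;
      A 1 0 * B 0 0, A 1 0 * B 0 1, A 1 1 * B 0 0, A 1 1 * B 0 1;
      A 1 0 * B 1 0, A 1 0 * B 1 1, A 1 1 * B 1 0, A 1 1 * B 1 1] := by
  ext i j
  fin_cases i <;> fin_cases j <;> rfl

lemma fanoLit0 : fano 0 = !![0, 0, -I/2, 0; 0, 0, 0, -I/2; -I/2, 0, 0, 0; 0, -I/2, 0, 0] := by
  have h : fano 0 = (1 / (2 * I)) • kron (pauli 1) (pauli 0) := rfl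
  have hm : pauli 1 = σ1 := rfl
  have hn : pauli 0 = (1 : Matrix (Fin 2) (Fin 2) ℂ) := rfl
  rw [h, kron_eq]
  simp only [hm, hn]
  ext i j
  fin_cases i <;> fin_cases j <;>
    simp [σ1, σ2, σ3, Matrix.one_apply, Matrix.smul_apply, smul_eq_mul, Matrix.vecHead, Matrix.vecTail] <;>
    (try field_simp) <;> (try ring_nf) <;> (try simp [I_sq])

lemma fanoLit1 : fano 1 = !![0, 0, -1/2, 0; 0, 0, 0, -1/2; 1/2, 0, 0, 0; 0, 1/2, 0, 0] := by
  have h : fano 1 = (1 / (2 * I)) • kron (pauli 2) (pauli 0) := rfl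
  have hm : pauli 2 = σ2 := rfl
  have hn : pauli 0 = (1 : Matrix (Fin 2) (Fin 2) ℂ) := rfl
  rw [h, kron_eq]
  simp only [hm, hn]
  ext i j
  fin_cases i <;> fin_cases j <;>
    simp [σ1, σ2, σ3, Matrix.one_apply, Matrix.smul_apply, smul_eq_mul, Matrix.vecHead, Matrix.vecTail] <;>
    (try field_simp) <;> (try ring_nf) <;> (try simp [I_sq])

lemma fanoLit3 : fano 3 = !![0, -I/2, 0, 0; -I/2, 0, 0, 0; 0, 0, 0, -I/2; 0, 0, -I/2, 0] := by
  have h : fano 3 = (1 / (2 * I)) • kron (pauli 0) (pauli 1) := rfl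
  have hm : pauli 0 = (1 : Matrix (Fin 2) (Fin 2) ℂ) := rfl
  have hn : pauli 1 = σ1 := rfl
  rw [h, kron_eq]
  simp only [hm, hn]
  ext i j
  fin_cases i <;> fin_cases j <;>
    simp [σ1, σ2, σ3, Matrix.one_apply, Matrix.smul_apply, smul_eq_mul, Matrix.vecHead, Matrix.vecTail] <;>
    (try field_simp) <;> (try ring_nf) <;> (try simp [I_sq])

lemma fanoLit4 : fano 4 = !![0, -1/2, 0, 0; 1/2, 0, 0, 0; 0, 0, 0, -1/2; 0, 0, 1/2, 0] := by
  have h : fano 4 = (1 / (2 * I)) • kron (pauli 0) (pauli 2) := rfl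
  have hm : pauli 0 = (1 : Matrix (Fin 2) (Fin 2) ℂ) := rfl
  have hn : pauli 2 = σ2 := rfl
  rw [h, kron_eq]
  simp only [hm, hn]
  ext i j
  fin_cases i <;> fin_cases j <;>
    simp [σ1, σ2, σ3, Matrix.one_apply, Matrix.smul_apply, smul_eq_mul, Matrix.vecHead, Matrix.vecTail] <;>
    (try field_simp) <;> (try ring_nf) <;> (try simp [I_sq])

lemma fanoLit6 : fano 6 = !![0, 0, 0, -I/2; 0, 0, -I/2, 0; 0, -I/2, 0, 0; -I/2, 0, 0, 0] := by
  have h : fano 6 = (1 / (2 * I)) • kron (pauli 1) (pauli 1) := rfl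
  have hm : pauli 1 = σ1 := rfl
  have hn : pauli 1 = σ1 := rfl
  rw [h, kron_eq]
  simp only [hm, hn]
  ext i j
  fin_cases i <;> fin_cases j <;>
    simp [σ1, σ2, σ3, Matrix.one_apply, Matrix.smul_apply, smul_eq_mul, Matrix.vecHead, Matrix.vecTail] <;>
    (try field_simp) <;> (try ring_nf) <;> (try simp [I_sq])

lemma fanoLit7 : fano 7 = !![0, 0, 0, -1/2; 0, 0, 1/2, 0; 0, -1/2, 0, 0; 1/2, 0, 0, 0] := by
  have h : fano 7 = (1 / (2 * I)) • kron (pauli 1) (pauli 2) := rfl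
  have hm : pauli 1 = σ1 := rfl
  have hn : pauli 2 = σ2 := rfl
  rw [h, kron_eq]
  simp only [hm, hn]
  ext i j
  fin_cases i <;> fin_cases j <;>
    simp [σ1, σ2, σ3, Matrix.one_apply, Matrix.smul_apply, smul_eq_mul, Matrix.vecHead, Matrix.vecTail] <;>
    (try field_simp) <;> (try ring_nf) <;> (try simp [I_sq])

lemma fanoLit8 : fano 8 = !![0, 0, -I/2, 0; 0, 0, 0, I/2; -I/2, 0, 0, 0; 0, I/2, 0, 0] := by
  have h : fano 8 = (1 / (2 * I)) • kron (pauli 1) (pauli 3) := rfl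
  have hm : pauli 1 = σ1 := rfl
  have hn : pauli 3 = σ3 := rfl
  rw [h, kron_eq]
  simp only [hm, hn]
  ext i j
  fin_cases i <;> fin_cases j <;>
    simp [σ1, σ2, σ3, Matrix.one_apply, Matrix.smul_apply, smul_eq_mul, Matrix.vecHead, Matrix.vecTail] <;>
    (try field_simp) <;> (try ring_nf) <;> (try simp [I_sq])

lemma fanoLit9 : fano 9 = !![0, 0, 0, -1/2; 0, 0, -1/2, 0; 0, 1/2, 0, 0; 1/2, 0, 0, 0] := by
  have h : fano 9 = (1 / (2 * I)) • kron (pauli 2) (pauli 1) := rfl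
  have hm : pauli 2 = σ2 := rfl
  have hn : pauli 1 = σ1 := rfl
  rw [h, kron_eq]
  simp only [hm, hn]
  ext i j
  fin_cases i <;> fin_cases j <;>
    simp [σ1, σ2, σ3, Matrix.one_apply, Matrix.smul_apply, smul_eq_mul, Matrix.vecHead, Matrix.vecTail] <;>
    (try field_simp) <;> (try ring_nf) <;> (try simp [I_sq])

lemma fanoLit10 : fano 10 = !![0, 0, 0, I/2; 0, 0, -I/2, 0; 0, -I/2, 0, 0; I/2, 0, 0, 0] := by
  have h : fano 10 = (1 / (2 * I)) • kron (pauli 2) (pauli 2) := rfl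
  have hm : pauli 2 = σ2 := rfl
  have hn : pauli 2 = σ2 := rfl
  rw [h, kron_eq]
  simp only [hm, hn]
  ext i j
  fin_cases i <;> fin_cases j <;>
    simp [σ1, σ2, σ3, Matrix.one_apply, Matrix.smul_apply, smul_eq_mul, Matrix.vecHead, Matrix.vecTail] <;>
    (try field_simp) <;> (try ring_nf) <;> (try simp [I_sq])

lemma fanoLit11 : fano 11 = !![0, 0, -1/2, 0; 0, 0, 0, 1/2; 1/2, 0, 0, 0; 0, -1/2, 0, 0] := by
  have h : fano 11 = (1 / (2 * I)) • kron (pauli 2) (pauli 3) := rfl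
  have hm : pauli 2 = σ2 := rfl
  have hn : pauli 3 = σ3 := rfl
  rw [h, kron_eq]
  simp only [hm, hn]
  ext i j
  fin_cases i <;> fin_cases j <;>
    simp [σ1, σ2, σ3, Matrix.one_apply, Matrix.smul_apply, smul_eq_mul, Matrix.vecHead, Matrix.vecTail] <;>
    (try field_simp) <;> (try ring_nf) <;> (try simp [I_sq])

lemma fanoLit12 : fano 12 = !![0, -I/2, 0, 0; -I/2, 0, 0, 0; 0, 0, 0, I/2; 0, 0, I/2, 0] := by
  have h : fano 12 = (1 / (2 * I)) • kron (pauli 3) (pauli 1) := rfl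
  have hm : pauli 3 = σ3 := rfl
  have hn : pauli 1 = σ1 := rfl
  rw [h, kron_eq]
  simp only [hm, hn]
  ext i j
  fin_cases i <;> fin_cases j <;>
    simp [σ1, σ2, σ3, Matrix.one_apply, Matrix.smul_apply, smul_eq_mul, Matrix.vecHead, Matrix.vecTail] <;>
    (try field_simp) <;> (try ring_nf) <;> (try simp [I_sq])

lemma fanoLit13 : fano 13 = !![0, -1/2, 0, 0; 1/2, 0, 0, 0; 0, 0, 0, 1/2; 0, 0, -1/2, 0] := by
  have h : fano 13 = (1 / (2 * I)) • kron (pauli 3) (pauli 2) := rfl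
  have hm : pauli 3 = σ3 := rfl
  have hn : pauli 2 = σ2 := rfl
  rw [h, kron_eq]
  simp only [hm, hn]
  ext i j
  fin_cases i <;> fin_cases j <;>
    simp [σ1, σ2, σ3, Matrix.one_apply, Matrix.smul_apply, smul_eq_mul, Matrix.vecHead, Matrix.vecTail] <;>
    (try field_simp) <;> (try ring_nf) <;> (try simp [I_sq])

lemma br_8_0 : ⁅fano 8, fano 0⁆ ∈ kSpan := by
  have h : ⁅fano 8, fano 0⁆ = 0 := by
    rw [Ring.lie_def, fanoLit8, fanoLit0]
    ext i j
    fin_cases i <;> fin_cases j <;>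
      simp [Matrix.mul_apply, Fin.sum_univ_four] <;>
      (try simp [Matrix.vecHead, Matrix.vecTail]) <;> (try ring)
  rw [h]; exact Submodule.zero_mem _

lemma br_8_3 : ⁅fano 8, fano 3⁆ ∈ kSpan := by
  have h : ⁅fano 8, fano 3⁆ = (1 : ℝ) • fano 7 := by
    rw [Ring.lie_def, fanoLit8, fanoLit3, fanoLit7]
    ext i j
    fin_cases i <;> fin_cases j <;>
      simp [Matrix.mul_apply, Fin.sum_univ_four, Matrix.smul_apply, Complex.real_smul] <;>
      (try simp [Matrix.vecHead, Matrix.vecTail]) <;>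
      (try ring_nf) <;> (try simp [I_sq]) <;> (try ring)
  rw [h]
  exact Submodule.smul_mem _ _ (Submodule.subset_span (by simp))

lemma br_8_6 : ⁅fano 8, fano 6⁆ ∈ kSpan := by
  have h : ⁅fano 8, fano 6⁆ = (1 : ℝ) • fano 4 := by
    rw [Ring.lie_def, fanoLit8, fanoLit6, fanoLit4]
    ext i j
    fin_cases i <;> fin_cases j <;>
      simp [Matrix.mul_apply, Fin.sum_univ_four, Matrix.smul_apply, Complex.real_smul] <;>
      (try simp [Matrix.vecHead, Matrix.vecTail]) <;>
      (try ring_nf) <;> (try simp [I_sq]) <;> (try ring)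
  rw [h]
  exact Submodule.smul_mem _ _ (Submodule.subset_span (by simp))

lemma br_10_0 : ⁅fano 10, fano 0⁆ ∈ kSpan := by
  have h : ⁅fano 10, fano 0⁆ = (-1 : ℝ) • fano 13 := by
    rw [Ring.lie_def, fanoLit10, fanoLit0, fanoLit13]
    ext i j
    fin_cases i <;> fin_cases j <;>
      simp [Matrix.mul_apply, Fin.sum_univ_four, Matrix.smul_apply, Complex.real_smul] <;>
      (try simp [Matrix.vecHead, Matrix.vecTail]) <;>
      (try ring_nf) <;> (try simp [I_sq]) <;> (try ring)
  rw [h]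
  exact Submodule.smul_mem _ _ (Submodule.subset_span (by simp))

lemma br_10_3 : ⁅fano 10, fano 3⁆ ∈ kSpan := by
  have h : ⁅fano 10, fano 3⁆ = (-1 : ℝ) • fano 11 := by
    rw [Ring.lie_def, fanoLit10, fanoLit3, fanoLit11]
    ext i j
    fin_cases i <;> fin_cases j <;>
      simp [Matrix.mul_apply, Fin.sum_univ_four, Matrix.smul_apply, Complex.real_smul] <;>
      (try simp [Matrix.vecHead, Matrix.vecTail]) <;>
      (try ring_nf) <;> (try simp [I_sq]) <;> (try ring)
  rw [h]
  exact Submodule.smul_mem _ _ (Submodule.subset_span (by simp))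

lemma br_10_6 : ⁅fano 10, fano 6⁆ ∈ kSpan := by
  have h : ⁅fano 10, fano 6⁆ = 0 := by
    rw [Ring.lie_def, fanoLit10, fanoLit6]
    ext i j
    fin_cases i <;> fin_cases j <;>
      simp [Matrix.mul_apply, Fin.sum_univ_four] <;>
      (try simp [Matrix.vecHead, Matrix.vecTail]) <;> (try ring)
  rw [h]; exact Submodule.zero_mem _

lemma br_12_0 : ⁅fano 12, fano 0⁆ ∈ kSpan := by
  have h : ⁅fano 12, fano 0⁆ = (1 : ℝ) • fano 9 := by
    rw [Ring.lie_def, fanoLit12, fanoLit0, fanoLit9]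
    ext i j
    fin_cases i <;> fin_cases j <;>
      simp [Matrix.mul_apply, Fin.sum_univ_four, Matrix.smul_apply, Complex.real_smul] <;>
      (try simp [Matrix.vecHead, Matrix.vecTail]) <;>
      (try ring_nf) <;> (try simp [I_sq]) <;> (try ring)
  rw [h]
  exact Submodule.smul_mem _ _ (Submodule.subset_span (by simp))

lemma br_12_3 : ⁅fano 12, fano 3⁆ ∈ kSpan := by
  have h : ⁅fano 12, fano 3⁆ = 0 := by
    rw [Ring.lie_def, fanoLit12, fanoLit3]
    ext i j
    fin_cases i <;> fin_cases j <;>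
      simp [Matrix.mul_apply, Fin.sum_univ_four] <;>
      (try simp [Matrix.vecHead, Matrix.vecTail]) <;> (try ring)
  rw [h]; exact Submodule.zero_mem _

lemma br_12_6 : ⁅fano 12, fano 6⁆ ∈ kSpan := by
  have h : ⁅fano 12, fano 6⁆ = (1 : ℝ) • fano 1 := by
    rw [Ring.lie_def, fanoLit12, fanoLit6, fanoLit1]
    ext i j
    fin_cases i <;> fin_cases j <;>
      simp [Matrix.mul_apply, Fin.sum_univ_four, Matrix.smul_apply, Complex.real_smul] <;>
      (try simp [Matrix.vecHead, Matrix.vecTail]) <;>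
      (try ring_nf) <;> (try simp [I_sq]) <;> (try ring)
  rw [h]
  exact Submodule.smul_mem _ _ (Submodule.subset_span (by simp))

/-- `[a', a] ⊆ k`. -/
theorem lie_aPrime_a_subset_k :
    ∀ X ∈ aPrimeSpan, ∀ Y ∈ aSpan, ⁅X, Y⁆ ∈ kSpan := by
  intro X hX
  induction hX using Submodule.span_induction with
  | mem x hx =>
    intro Y hY
    induction hY using Submodule.span_induction with
    | mem y hy =>
      rcases hx with rfl|rfl|rfl <;> rcases hy with rfl|rfl|rfl
      exacts [br_8_0, br_8_3, br_8_6, br_10_0, br_10_3, br_10_6, br_12_0, br_12_3, br_12_6]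
    | zero => rw [Ring.lie_def]; simp
    | add y z _ _ hy hz =>
      rw [Ring.lie_def] at hy hz ⊢
      convert Submodule.add_mem _ hy hz using 1; noncomm_ring
    | smul c y _ hy =>
      rw [Ring.lie_def] at hy ⊢
      convert Submodule.smul_mem _ c hy using 1
      rw [smul_sub, mul_smul_comm, smul_mul_assoc]
  | zero => intro Y hY; rw [Ring.lie_def]; simp
  | add x y _ _ hx hy =>
    intro Y hY
    have h1 := hx Y hY
    have h2 := hy Y hY
    rw [Ring.lie_def] at h1 h2 ⊢
    convert Submodule.add_mem _ h1 h2 using 1; noncomm_ring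
  | smul c x _ hx =>
    intro Y hY
    have h1 := hx Y hY
    rw [Ring.lie_def] at h1 ⊢
    convert Submodule.smul_mem _ c h1 using 1
    rw [smul_sub, mul_smul_comm, smul_mul_assoc]
end
end

section
/- For real β₁, β₂, β₃, exp(β₁λ₉ + β₂λ₁₁ + β₃λ₁₃) = H₂ D(β) H₂ᵀ, where H₂ = (1/2)[[-1,1,-1,1],[-1,1,1,-1],[-1,-1,1,1],[1,1,1,1]] and D(β) = diag(e^{-i(β₁+β₂+β₃)/2}, e^{i(β₁+β₂-β₃)/2}, e^{i(β₁-β₂+β₃)/2}, e^{i(-β₁+β₂+β₃)/2}). -/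
open Matrix Complex

noncomputable section

/-- The diagonal matrix `D(x)` of equation (eq:diag). -/
def Dmat (x₁ x₂ x₃ : ℝ) : Matrix (Fin 4) (Fin 4) ℂ :=
  Matrix.diagonal
    ![Complex.exp (-(I / 2) * (x₁ + x₂ + x₃)),
      Complex.exp ((I / 2) * (x₁ + x₂ - x₃)),
      Complex.exp ((I / 2) * (x₁ - x₂ + x₃)),
      Complex.exp ((I / 2) * (-x₁ + x₂ + x₃))]

/-- The Hadamard-type matrix `H₂`. -/
def H₂ : Matrix (Fin 4) (Fin 4) ℂ :=
  (1 / 2 : ℂ) • !![-1, 1, -1, 1; -1, 1, 1, -1; -1, -1, 1, 1; 1, 1, 1, 1]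


lemma kron13 : kron σ1 σ3 = !![0,0,1,0; 0,0,0,-1; 1,0,0,0; 0,-1,0,0] := by
  ext i j; fin_cases i <;> fin_cases j <;> norm_num [kron, σ1, σ3]

lemma kron22 : kron σ2 σ2 = !![0,0,0,-1; 0,0,1,0; 0,1,0,0; -1,0,0,0] := by
  ext i j; fin_cases i <;> fin_cases j <;> norm_num [kron, σ2, Complex.I_mul_I]

lemma kron31 : kron σ3 σ1 = !![0,1,0,0; 1,0,0,0; 0,0,0,-1; 0,0,-1,0] := by
  ext i j; fin_cases i <;> fin_cases j <;> norm_num [kron, σ1, σ3]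

lemma one_div_two_I : (1 : ℂ) / (2 * I) = -(I / 2) := by
  rw [div_eq_iff (by simp [I_ne_zero] : (2 * I : ℂ) ≠ 0)]
  ring_nf
  simp [I_sq]

lemma diag4 (a b c d : ℂ) :
    Matrix.diagonal ![a, b, c, d] = !![a,0,0,0; 0,b,0,0; 0,0,c,0; 0,0,0,d] := by
  ext i j
  fin_cases i <;> fin_cases j <;>
    norm_num [Matrix.diagonal_apply, Fin.ext_iff, Matrix.vecHead, Matrix.vecTail]

set_option maxHeartbeats 1000000 in
lemma H2_mul_H2T : H₂ * H₂ᵀ = 1 := by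
  ext i j
  fin_cases i <;> fin_cases j <;>
    norm_num [H₂, Matrix.mul_apply, Fin.sum_univ_four, Matrix.one_apply,
      Matrix.vecHead, Matrix.vecTail, Fin.ext_iff, Matrix.cons_val_two, Matrix.cons_val_three]

set_option maxHeartbeats 2000000 in
lemma key_sum (β₁ β₂ β₃ : ℝ) :
    (β₁ : ℂ) • (-(I / 2) • !![0,0,1,0; 0,0,0,-1; 1,0,0,0; 0,-1,0,0])
      + (β₂ : ℂ) • (-(I / 2) • !![0,0,0,-1; 0,0,1,0; 0,1,0,0; -1,0,0,0])
      + (β₃ : ℂ) • (-(I / 2) • !![0,1,0,0; 1,0,0,0; 0,0,0,-1; 0,0,-1,0])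
    = H₂ * !![-(I / 2) * (β₁ + β₂ + β₃),0,0,0; 0,(I / 2) * (β₁ + β₂ - β₃),0,0;
        0,0,(I / 2) * (β₁ - β₂ + β₃),0; 0,0,0,(I / 2) * (-β₁ + β₂ + β₃)] * H₂ᵀ := by
  ext i j
  fin_cases i <;> fin_cases j <;>
    · simp [H₂, Matrix.mul_apply, Fin.sum_univ_four, Matrix.vecHead, Matrix.vecTail]
      ring

set_option maxHeartbeats 1000000 in
/-- `exp(β₁λ₉ + β₂λ₁₁ + β₃λ₁₃) = H₂ D(β) H₂ᵀ`. -/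
theorem exp_aPrime_factor_eq_H2_D_H2T (β₁ β₂ β₃ : ℝ) :
    NormedSpace.exp ((β₁ : ℂ) • fano 8 + (β₂ : ℂ) • fano 10 + (β₃ : ℂ) • fano 12) =
      H₂ * Dmat β₁ β₂ β₃ * H₂ᵀ := by

  have hinv : H₂⁻¹ = H₂ᵀ := Matrix.inv_eq_right_inv H2_mul_H2T
  have hU : IsUnit H₂ := by
    apply (Matrix.isUnit_iff_isUnit_det H₂).mpr
    have := Matrix.det_mul H₂ H₂ᵀ
    rw [H2_mul_H2T, Matrix.det_one] at this
    exact IsUnit.of_mul_eq_one _ this.symm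
  have h8 : fano 8 = -(I / 2) • !![0,0,1,0; 0,0,0,-1; 1,0,0,0; 0,-1,0,0] := by
    show sig 1 3 = _
    rw [sig, show pauli 1 = σ1 from rfl, show pauli 3 = σ3 from rfl, kron13, one_div_two_I]
  have h10 : fano 10 = -(I / 2) • !![0,0,0,-1; 0,0,1,0; 0,1,0,0; -1,0,0,0] := by
    show sig 2 2 = _
    rw [sig, show pauli 2 = σ2 from rfl, kron22, one_div_two_I]
  have h12 : fano 12 = -(I / 2) • !![0,1,0,0; 1,0,0,0; 0,0,0,-1; 0,0,-1,0] := by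
    show sig 3 1 = _
    rw [sig, show pauli 3 = σ3 from rfl, show pauli 1 = σ1 from rfl, kron31, one_div_two_I]
  have hv : NormedSpace.exp
      (![-(I / 2) * (β₁ + β₂ + β₃), (I / 2) * (β₁ + β₂ - β₃),
        (I / 2) * (β₁ - β₂ + β₃), (I / 2) * (-β₁ + β₂ + β₃)] : Fin 4 → ℂ)
      = ![Complex.exp (-(I / 2) * (β₁ + β₂ + β₃)), Complex.exp ((I / 2) * (β₁ + β₂ - β₃)),
        Complex.exp ((I / 2) * (β₁ - β₂ + β₃)), Complex.exp ((I / 2) * (-β₁ + β₂ + β₃))] := by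
    rw [Pi.exp_def]
    funext k
    fin_cases k <;>
      simp [← Complex.exp_eq_exp_ℂ, Matrix.vecHead, Matrix.vecTail]
  rw [h8, h10, h12, key_sum, ← diag4, ← hinv,
    Matrix.exp_conj H₂ _ hU, hinv, Matrix.exp_diagonal, hv]
  rfl
end
end

section
/- For real α₁, α₂, α₃, the eigenvalues of the matrix A = α₁λ₁ + α₂λ₄ + α₃λ₇ ∈ su(4) are (−i/2)(α₁+α₂+α₃), (i/2)(α₁+α₂−α₃), (i/2)(α₁−α₂+α₃), (i/2)(−α₁+α₂+α₃); consequently all eigenvalues of A have imaginary part of absolute value < π if and only if (α₁,α₂,α₃) lies in the open regular octahedron {|α₁+α₂+α₃| < 2π, |α₁+α₂−α₃| < 2π, |α₁−α₂+α₃| < 2π, |−α₁+α₂+α₃| < 2π}. -/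
open Matrix Complex

noncomputable section

def Pm : Matrix (Fin 4) (Fin 4) ℂ :=
  !![1,1,1,1; 1,-1,1,-1; 1,-1,-1,1; 1,1,-1,-1]

def Qm : Matrix (Fin 4) (Fin 4) ℂ :=
  (1/4 : ℂ) • !![1,1,1,1; 1,-1,-1,1; 1,1,-1,-1; 1,-1,1,-1]

lemma PQ : Pm * Qm = 1 := by
  ext i j
  fin_cases i <;> fin_cases j <;>
    norm_num [Pm, Qm, Matrix.mul_apply, Fin.sum_univ_four, Matrix.one_apply, Fin.ext_iff, Matrix.cons_val_two, Matrix.cons_val_three, Matrix.vecHead, Matrix.vecTail]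

lemma QP : Qm * Pm = 1 := by
  ext i j
  fin_cases i <;> fin_cases j <;>
    norm_num [Pm, Qm, Matrix.mul_apply, Fin.sum_univ_four, Matrix.one_apply, Fin.ext_iff, Matrix.cons_val_two, Matrix.cons_val_three, Matrix.vecHead, Matrix.vecTail]

def Pu : (Matrix (Fin 4) (Fin 4) ℂ)ˣ := ⟨Pm, Qm, PQ, QP⟩

lemma hIinv : (1 / (2 * I) : ℂ) = -(I / 2) := by
  rw [div_eq_iff (by simp : (2 * I : ℂ) ≠ 0)]
  linear_combination Complex.I_mul_I

lemma fano0 : fano 0 = -(I/2) • !![0,0,1,0; 0,0,0,1; 1,0,0,0; 0,1,0,0] := by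
  rw [show fano 0 = sig 1 0 from rfl, sig, hIinv]
  congr 1
  ext i j
  fin_cases i <;> fin_cases j <;>
    norm_num [kron, pauli, σ1, Matrix.one_apply]

lemma fano3 : fano 3 = -(I/2) • !![0,1,0,0; 1,0,0,0; 0,0,0,1; 0,0,1,0] := by
  rw [show fano 3 = sig 0 1 from rfl, sig, hIinv]
  congr 1
  ext i j
  fin_cases i <;> fin_cases j <;>
    norm_num [kron, pauli, σ1, Matrix.one_apply]

lemma fano6 : fano 6 = -(I/2) • !![0,0,0,1; 0,0,1,0; 0,1,0,0; 1,0,0,0] := by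
  rw [show fano 6 = sig 1 1 from rfl, sig, hIinv]
  congr 1
  ext i j
  fin_cases i <;> fin_cases j <;>
    norm_num [kron, pauli, σ1, Matrix.one_apply]

set_option maxHeartbeats 2000000 in
set_option maxRecDepth 100000 in
/-- the eigenvalues of `A = α₁λ₁ + α₂λ₄ + α₃λ₇` are
`(-i/2)(α₁+α₂+α₃), (i/2)(α₁+α₂-α₃), (i/2)(α₁-α₂+α₃), (i/2)(-α₁+α₂+α₃)`;
consequently all eigenvalues have `|Im| < π` iff `(α₁,α₂,α₃)` lies in the open
regular octahedron with the four constraints `|±α₁ ± α₂ ± α₃| < 2π`. -/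
theorem spectrum_a_factor_and_octahedron (α₁ α₂ α₃ : ℝ) :
    spectrum ℂ ((α₁ : ℂ) • fano 0 + (α₂ : ℂ) • fano 3 + (α₃ : ℂ) • fano 6) =
      {(-(I / 2)) * (α₁ + α₂ + α₃), (I / 2) * (α₁ + α₂ - α₃),
        (I / 2) * (α₁ - α₂ + α₃), (I / 2) * (-α₁ + α₂ + α₃)} ∧
    ((∀ z ∈ spectrum ℂ ((α₁ : ℂ) • fano 0 + (α₂ : ℂ) • fano 3 + (α₃ : ℂ) • fano 6),
        |z.im| < Real.pi) ↔
      (|α₁ + α₂ + α₃| < 2 * Real.pi ∧ |α₁ + α₂ - α₃| < 2 * Real.pi ∧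
       |α₁ - α₂ + α₃| < 2 * Real.pi ∧ |-α₁ + α₂ + α₃| < 2 * Real.pi)) := by
  set c1 : ℂ := (-(I / 2)) * (α₁ + α₂ + α₃) with hc1
  set c2 : ℂ := (I / 2) * (α₁ + α₂ - α₃) with hc2
  set c3 : ℂ := (I / 2) * (α₁ - α₂ + α₃) with hc3
  set c4 : ℂ := (I / 2) * (-α₁ + α₂ + α₃) with hc4
  set A : Matrix (Fin 4) (Fin 4) ℂ :=
    (α₁ : ℂ) • fano 0 + (α₂ : ℂ) • fano 3 + (α₃ : ℂ) • fano 6 with hA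
  have hAP : A * Pm = Pm * diagonal ![c1, c2, c3, c4] := by
    ext i j
    fin_cases i <;> fin_cases j <;>
      · norm_num [hA, fano0, fano3, fano6, hc1, hc2, hc3, hc4, Pm,
          Matrix.mul_apply, Fin.sum_univ_four, Matrix.diagonal_apply, Matrix.cons_val_two, Matrix.cons_val_three, Matrix.vecHead, Matrix.vecTail]
        ring
  have key : A = Pm * diagonal ![c1, c2, c3, c4] * Qm := by
    calc A = A * (Pm * Qm) := by rw [PQ, mul_one]
    _ = (A * Pm) * Qm := by rw [mul_assoc]
    _ = Pm * diagonal ![c1, c2, c3, c4] * Qm := by rw [hAP]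
  have hspec : spectrum ℂ A = {c1, c2, c3, c4} := by
    have h2 : ((Pu : Matrix (Fin 4) (Fin 4) ℂ) * diagonal ![c1, c2, c3, c4] *
        ((Pu⁻¹ : (Matrix (Fin 4) (Fin 4) ℂ)ˣ) : Matrix (Fin 4) (Fin 4) ℂ))
        = Pm * diagonal ![c1, c2, c3, c4] * Qm := rfl
    rw [key, ← h2, spectrum.units_conjugate, spectrum_diagonal]
    ext z
    simp [Matrix.range_cons, Matrix.range_empty]
    tauto
  refine ⟨hspec, ?_⟩
  rw [hspec]
  have him : ∀ x : ℝ, |(-(I/2) * (x:ℂ)).im| < Real.pi ↔ |x| < 2 * Real.pi := by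
    intro x
    have h : (-(I/2) * (x:ℂ)).im = -(x/2) := by simp; ring
    rw [h, abs_neg, abs_div]
    rw [show |(2:ℝ)| = 2 by norm_num, div_lt_iff₀ (by norm_num : (0:ℝ) < 2)]
    constructor <;> intro hh <;> linarith
  have him' : ∀ x : ℝ, |((I/2) * (x:ℂ)).im| < Real.pi ↔ |x| < 2 * Real.pi := by
    intro x
    have h : ((I/2) * (x:ℂ)).im = x/2 := by simp; ring
    rw [h, abs_div]
    rw [show |(2:ℝ)| = 2 by norm_num, div_lt_iff₀ (by norm_num : (0:ℝ) < 2)]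
    constructor <;> intro hh <;> linarith
  constructor
  · intro h
    refine ⟨?_, ?_, ?_, ?_⟩
    · have hz := h c1 (by simp)
      rw [hc1] at hz
      exact (him (α₁ + α₂ + α₃)).mp (by push_cast at hz ⊢; exact hz)
    · have hz := h c2 (by simp)
      rw [hc2] at hz
      exact (him' (α₁ + α₂ - α₃)).mp (by push_cast at hz ⊢; exact hz)
    · have hz := h c3 (by simp)
      rw [hc3] at hz
      exact (him' (α₁ - α₂ + α₃)).mp (by push_cast at hz ⊢; exact hz)
    · have hz := h c4 (by simp)
      rw [hc4] at hz
      exact (him' (-α₁ + α₂ + α₃)).mp (by push_cast at hz ⊢; exact hz)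
  · rintro ⟨h1, h2, h3, h4⟩ z hz
    simp only [Set.mem_insert_iff, Set.mem_singleton_iff] at hz
    rcases hz with rfl | rfl | rfl | rfl
    · rw [hc1]; have := (him (α₁ + α₂ + α₃)).mpr h1; push_cast at this ⊢; exact this
    · rw [hc2]; have := (him' (α₁ + α₂ - α₃)).mpr h2; push_cast at this ⊢; exact this
    · rw [hc3]; have := (him' (α₁ - α₂ + α₃)).mpr h3; push_cast at this ⊢; exact this
    · rw [hc4]; have := (him' (-α₁ + α₂ + α₃)).mpr h4; push_cast at this ⊢; exact this
end
end
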